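/- arXiv:cond-mat/9705315 — 2 statements merged into one kernel-verified Lean document; each statement's English description precedes it below -/
import Mathlib

section
/- Let T be the adjacency matrix of a graph with maximum degree d and S diagonal with diagonal entries ±1. If U > d/2, then the number of negative eigenvalues of T - 2US (with multiplicity) equals the number of indices x with S_{xx} = 1. -/
open Finset Matrix

private lemma disjoint_dim_le' {n : ℕ} (q : EuclideanSpace ℝ (Fin n) → ℝ)
    (W E : Submodule ℝ (EuclideanSpace ℝ (Fin n)))
    (hW : ∀ v ∈ W, v ≠ 0 → q v < 0) (hE : ∀ v ∈ E, 0 ≤ q v) :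
    Module.finrank ℝ W + Module.finrank ℝ E ≤ n := by
  have hdisj : W ⊓ E = ⊥ := by
    rw [Submodule.eq_bot_iff]
    intro v hv
    by_contra hne
    exact absurd (hE v hv.2) (not_le.mpr (hW v hv.1 hne))
  have h1 := Submodule.finrank_sup_add_finrank_inf_eq W E
  rw [hdisj, finrank_bot, add_zero] at h1
  rw [← h1]
  calc Module.finrank ℝ ↥(W ⊔ E) ≤ Module.finrank ℝ (EuclideanSpace ℝ (Fin n)) :=
        Submodule.finrank_le _
    _ = n := finrank_euclideanSpace_fin

private lemma pilp_sum_apply {n : ℕ} {ι : Type*} (s : Finset ι)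
    (f : ι → EuclideanSpace ℝ (Fin n)) (x : Fin n) :
    (∑ i ∈ s, f i) x = ∑ i ∈ s, f i x :=
  by rw [WithLp.ofLp_sum]; exact Finset.sum_apply x s _

private lemma quad_expand' {n : ℕ} {M : Matrix (Fin n) (Fin n) ℝ} (hM : M.IsHermitian)
    (v : EuclideanSpace ℝ (Fin n)) :
    v ⬝ᵥ M *ᵥ v = ∑ i, hM.eigenvalues i * (hM.eigenvectorBasis.repr v i)^2 := by
  set b := hM.eigenvectorBasis with hb
  have hv : (∑ i, b.repr v i • b i) = v := b.sum_repr v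
  have hdot : ∀ j, v ⬝ᵥ (b j : EuclideanSpace ℝ (Fin n)) = b.repr v j := by
    intro j
    rw [b.repr_apply_apply]
    simp [PiLp.inner_apply, RCLike.inner_apply, dotProduct, mul_comm]
  have hmv : M *ᵥ v = ∑ i, (b.repr v i * hM.eigenvalues i) • (b i : EuclideanSpace ℝ (Fin n)) := by
    conv_lhs => rw [← hv]
    rw [← Matrix.mulVecLin_apply, WithLp.ofLp_sum, WithLp.ofLp_sum, map_sum]
    refine Finset.sum_congr rfl fun i _ => ?_
    rw [WithLp.ofLp_smul, WithLp.ofLp_smul, _root_.map_smul, Matrix.mulVecLin_apply,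
      hM.mulVec_eigenvectorBasis i, smul_smul, mul_comm]
  rw [hmv]
  simp only [dotProduct, pilp_sum_apply, PiLp.smul_apply, smul_eq_mul, Finset.mul_sum]
  rw [Finset.sum_comm]
  refine Finset.sum_congr rfl fun i _ => ?_
  have h2 : ∑ x, v x * ((b.repr v i * hM.eigenvalues i) * b i x)
      = (b.repr v i * hM.eigenvalues i) * (v ⬝ᵥ (b i : EuclideanSpace ℝ (Fin n))) := by
    rw [dotProduct, Finset.mul_sum]
    exact Finset.sum_congr rfl fun x _ => by ring
  rw [h2, hdot]
  ring

private lemma mem_span_single' {n : ℕ} (p : Fin n → Prop)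
    (v : EuclideanSpace ℝ (Fin n))
    (hv : v ∈ Submodule.span ℝ (Set.range fun x : {x // p x} =>
      (EuclideanSpace.single x.1 (1:ℝ) : EuclideanSpace ℝ (Fin n))))
    (x : Fin n) (hx : ¬ p x) : v x = 0 := by
  induction hv using Submodule.span_induction with
  | mem w hw =>
      obtain ⟨y, rfl⟩ := hw
      have hne : x ≠ y.1 := fun h => hx (h ▸ y.2)
      simp [EuclideanSpace.single_apply, hne]
  | zero => rfl
  | add a b _ _ ha hb =>
      show a x + b x = 0
      rw [ha, hb, add_zero]
  | smul c a _ ha =>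
      show c * a x = 0
      rw [ha, mul_zero]

private lemma finrank_span_single' {n : ℕ} (p : Fin n → Prop) [DecidablePred p] :
    Module.finrank ℝ (Submodule.span ℝ (Set.range fun x : {x // p x} =>
      (EuclideanSpace.single x.1 (1:ℝ) : EuclideanSpace ℝ (Fin n))))
      = (univ.filter p).card := by
  have hli : LinearIndependent ℝ (fun x : {x // p x} =>
      (EuclideanSpace.single x.1 (1:ℝ) : EuclideanSpace ℝ (Fin n))) := by
    have h := (EuclideanSpace.basisFun (Fin n) ℝ).toBasis.linearIndependent
    have h2 := h.comp (Subtype.val : {x // p x} → Fin n) Subtype.val_injective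
    simpa [Function.comp_def, EuclideanSpace.basisFun_apply] using h2
  rw [finrank_span_eq_card hli, Fintype.card_subtype]

private lemma repr_eq_zero_of_mem_span' {n : ℕ} {M : Matrix (Fin n) (Fin n) ℝ}
    (hM : M.IsHermitian) (c : Fin n → Prop)
    (v : EuclideanSpace ℝ (Fin n))
    (hv : v ∈ Submodule.span ℝ (Set.range fun i : {i // c i} =>
      hM.eigenvectorBasis i.1))
    (i : Fin n) (hi : ¬ c i) : hM.eigenvectorBasis.repr v i = 0 := by
  induction hv using Submodule.span_induction with
  | mem w hw =>
      obtain ⟨j, rfl⟩ := hw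
      have hne : i ≠ j.1 := fun h => hi (h ▸ j.2)
      rw [hM.eigenvectorBasis.repr_self]
      simp [EuclideanSpace.single_apply, hne]
  | zero => simp
  | add a b _ _ ha hb =>
      rw [map_add]
      show hM.eigenvectorBasis.repr a i + hM.eigenvectorBasis.repr b i = 0
      rw [ha, hb, add_zero]
  | smul c a _ ha =>
      rw [hM.eigenvectorBasis.repr.map_smul]
      show c * hM.eigenvectorBasis.repr a i = 0
      rw [ha, mul_zero]

private lemma finrank_span_eigen' {n : ℕ} {M : Matrix (Fin n) (Fin n) ℝ}
    (hM : M.IsHermitian) (c : Fin n → Prop) [DecidablePred c] :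
    Module.finrank ℝ (Submodule.span ℝ (Set.range fun i : {i // c i} =>
      hM.eigenvectorBasis i.1)) = (univ.filter c).card := by
  have hli : LinearIndependent ℝ (fun i : {i // c i} => hM.eigenvectorBasis i.1) :=
    (hM.eigenvectorBasis.orthonormal.linearIndependent).comp
      (Subtype.val : {i // c i} → Fin n) Subtype.val_injective
  rw [finrank_span_eq_card hli, Fintype.card_subtype]

private lemma adj_quad_bound' {n : ℕ} (G : SimpleGraph (Fin n)) [DecidableRel G.Adj]
    (d : ℕ) (hdeg : ∀ v : Fin n, G.degree v ≤ d) (v : Fin n → ℝ) :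
    |v ⬝ᵥ (G.adjMatrix ℝ *ᵥ v)| ≤ d * ∑ x, v x ^ 2 := by
  have hrow : ∀ x : Fin n, ∑ y, (G.adjMatrix ℝ) x y = (G.degree x : ℝ) := by
    intro x
    simp [SimpleGraph.adjMatrix_apply, Finset.sum_boole, SimpleGraph.degree,
      SimpleGraph.neighborFinset_eq_filter]
  have h1 : v ⬝ᵥ (G.adjMatrix ℝ *ᵥ v) = ∑ x, ∑ y, (G.adjMatrix ℝ) x y * (v x * v y) := by
    simp only [dotProduct, mulVec, Finset.mul_sum]
    exact Finset.sum_congr rfl fun x _ => Finset.sum_congr rfl fun y _ => by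
      ring
  rw [h1]
  calc |∑ x, ∑ y, (G.adjMatrix ℝ) x y * (v x * v y)|
      ≤ ∑ x, |∑ y, (G.adjMatrix ℝ) x y * (v x * v y)| := Finset.abs_sum_le_sum_abs _ _
    _ ≤ ∑ x, ∑ y, |(G.adjMatrix ℝ) x y * (v x * v y)| :=
        Finset.sum_le_sum fun x _ => Finset.abs_sum_le_sum_abs _ _
    _ ≤ ∑ x, ∑ y, (G.adjMatrix ℝ) x y * ((v x ^ 2 + v y ^ 2) / 2) := by
        refine Finset.sum_le_sum fun x _ => Finset.sum_le_sum fun y _ => ?_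
        rw [abs_mul, abs_of_nonneg (by simp only [SimpleGraph.adjMatrix_apply]; positivity : (0:ℝ) ≤ (G.adjMatrix ℝ) x y)]
        refine mul_le_mul_of_nonneg_left ?_ (by simp only [SimpleGraph.adjMatrix_apply]; positivity)
        rw [abs_mul]
        nlinarith [sq_nonneg (|v x| - |v y|), sq_abs (v x), sq_abs (v y), abs_nonneg (v x), abs_nonneg (v y)]
    _ = (∑ x, (G.degree x : ℝ) * (v x ^ 2)) := by
        have hsplit : ∀ x y : Fin n, (G.adjMatrix ℝ) x y * ((v x ^ 2 + v y ^ 2) / 2)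
            = (G.adjMatrix ℝ) x y * v x ^ 2 / 2 + (G.adjMatrix ℝ) x y * v y ^ 2 / 2 :=
          fun x y => by ring
        simp_rw [hsplit, Finset.sum_add_distrib]
        have e1 : ∑ x, ∑ y, (G.adjMatrix ℝ) x y * v x ^ 2 / 2
            = ∑ x, (G.degree x : ℝ) * v x ^ 2 / 2 := by
          refine Finset.sum_congr rfl fun x _ => ?_
          rw [← Finset.sum_div, ← Finset.sum_mul, hrow]
        have e2 : ∑ x, ∑ y, (G.adjMatrix ℝ) x y * v y ^ 2 / 2
            = ∑ y, (G.degree y : ℝ) * v y ^ 2 / 2 := by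
          rw [Finset.sum_comm]
          refine Finset.sum_congr rfl fun y _ => ?_
          have : ∀ x, (G.adjMatrix ℝ) x y = (G.adjMatrix ℝ) y x := by
            intro x; simp [SimpleGraph.adjMatrix_apply, SimpleGraph.adj_comm]
          simp_rw [this]
          rw [← Finset.sum_div, ← Finset.sum_mul, hrow]
        rw [e1, e2, ← Finset.sum_add_distrib]
        exact Finset.sum_congr rfl fun x _ => by ring
    _ ≤ ∑ x, (d : ℝ) * v x ^ 2 := by
        refine Finset.sum_le_sum fun x _ => ?_
        have := hdeg x
        have h2 : (G.degree x : ℝ) ≤ d := by exact_mod_cast this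
        nlinarith [sq_nonneg (v x)]
    _ = d * ∑ x, v x ^ 2 := by rw [← Finset.mul_sum]

private lemma diag_quad' {n : ℕ} (S : Matrix (Fin n) (Fin n) ℝ)
    (hdiag : ∀ x y : Fin n, x ≠ y → S x y = 0) (v : Fin n → ℝ) :
    v ⬝ᵥ (S *ᵥ v) = ∑ x, S x x * v x ^ 2 := by
  refine Finset.sum_congr rfl fun x _ => ?_
  have : (S *ᵥ v) x = S x x * v x := by
    rw [mulVec, dotProduct]
    rw [Finset.sum_eq_single x (fun y _ hy => by rw [hdiag x y (Ne.symm hy), zero_mul])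
      (fun h => absurd (Finset.mem_univ x) h)]
  rw [this]; ring

/-- Let `T` be the adjacency matrix of a finite simple graph of maximum degree `d`,
and let `S` be a diagonal matrix with diagonal entries `±1`. If `2U > d`, then the
number of negative eigenvalues of `T - 2U·S` (with multiplicity) equals the number
of indices `x` with `S x x = 1`. -/
theorem card_neg_eigenvalues_eq_card_plus_sites
    (n : ℕ) (G : SimpleGraph (Fin n)) [DecidableRel G.Adj]
    (d : ℕ) (hdeg : ∀ v : Fin n, G.degree v ≤ d)
    (S : Matrix (Fin n) (Fin n) ℝ)
    (hdiag : ∀ x y : Fin n, x ≠ y → S x y = 0)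
    (hpm : ∀ x : Fin n, S x x = 1 ∨ S x x = -1)
    (U : ℝ) (hU : (d : ℝ) < 2 * U)
    (hM : ((G.adjMatrix ℝ) - (2 * U) • S).IsHermitian) :
    (Finset.univ.filter (fun i : Fin n => hM.eigenvalues i < 0)).card
      = (Finset.univ.filter (fun x : Fin n => S x x = 1)).card := by
  set M : Matrix (Fin n) (Fin n) ℝ := (G.adjMatrix ℝ) - (2 * U) • S with hMdef
  set μ : Fin n → ℝ := hM.eigenvalues with hμ
  -- the quadratic form
  have hq : ∀ v : Fin n → ℝ,
      v ⬝ᵥ (M *ᵥ v) = v ⬝ᵥ (G.adjMatrix ℝ *ᵥ v) - 2*U * ∑ x, S x x * v x ^ 2 := by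
    intro v
    rw [hMdef, Matrix.sub_mulVec, dotProduct_sub, Matrix.smul_mulVec,
      dotProduct_smul, smul_eq_mul, diag_quad' S hdiag]
  -- the four subspaces
  set Wp : Submodule ℝ (EuclideanSpace ℝ (Fin n)) :=
    Submodule.span ℝ (Set.range fun x : {x // S x x = 1} =>
      (EuclideanSpace.single x.1 (1:ℝ) : EuclideanSpace ℝ (Fin n))) with hWp
  set Wm : Submodule ℝ (EuclideanSpace ℝ (Fin n)) :=
    Submodule.span ℝ (Set.range fun x : {x // S x x = -1} =>
      (EuclideanSpace.single x.1 (1:ℝ) : EuclideanSpace ℝ (Fin n))) with hWm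
  set Ep : Submodule ℝ (EuclideanSpace ℝ (Fin n)) :=
    Submodule.span ℝ (Set.range fun i : {i // 0 ≤ μ i} =>
      hM.eigenvectorBasis i.1) with hEp
  set Em : Submodule ℝ (EuclideanSpace ℝ (Fin n)) :=
    Submodule.span ℝ (Set.range fun i : {i // μ i ≤ 0} =>
      hM.eigenvectorBasis i.1) with hEm
  -- positivity of the norm squared
  have hnormsq : ∀ v : EuclideanSpace ℝ (Fin n), v ≠ 0 → 0 < ∑ x, v x ^ 2 := by
    intro v hv
    have hex : ∃ x, v x ≠ 0 := by
      by_contra h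
      push_neg at h
      exact hv (WithLp.ofLp_injective 2 (funext h))
    obtain ⟨x, hx⟩ := hex
    exact Finset.sum_pos' (fun y _ => sq_nonneg _) ⟨x, Finset.mem_univ x, by positivity⟩
  -- q is negative on Wp
  have hWneg : ∀ v ∈ Wp, v ≠ 0 → v ⬝ᵥ (M *ᵥ v) < 0 := by
    intro v hv hvne
    have hz : ∀ x : Fin n, ¬ S x x = 1 → v x = 0 :=
      fun x hx => mem_span_single' _ v hv x hx
    have hsum : ∑ x, S x x * v x ^ 2 = ∑ x, v x ^ 2 := by
      refine Finset.sum_congr rfl fun x _ => ?_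
      by_cases h : S x x = 1
      · rw [h, one_mul]
      · rw [hz x h]; ring
    have habs := adj_quad_bound' G d hdeg v
    have hle := le_abs_self (v ⬝ᵥ (G.adjMatrix ℝ *ᵥ v))
    have hpos := hnormsq v hvne
    rw [hq v, hsum]
    nlinarith
  -- q is positive on Wm
  have hWpos : ∀ v ∈ Wm, v ≠ 0 → 0 < v ⬝ᵥ (M *ᵥ v) := by
    intro v hv hvne
    have hz : ∀ x : Fin n, ¬ S x x = -1 → v x = 0 :=
      fun x hx => mem_span_single' _ v hv x hx
    have hsum : ∑ x, S x x * v x ^ 2 = -∑ x, v x ^ 2 := by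
      rw [← Finset.sum_neg_distrib]
      refine Finset.sum_congr rfl fun x _ => ?_
      by_cases h : S x x = -1
      · rw [h]; ring
      · rw [hz x h]; ring
    have habs := adj_quad_bound' G d hdeg v
    have hle := neg_abs_le (v ⬝ᵥ (G.adjMatrix ℝ *ᵥ v))
    have hpos := hnormsq v hvne
    rw [hq v, hsum]
    nlinarith
  -- q is nonnegative on Ep
  have hEpos : ∀ v ∈ Ep, 0 ≤ v ⬝ᵥ (M *ᵥ v) := by
    intro v hv
    rw [quad_expand' hM v]
    refine Finset.sum_nonneg fun i _ => ?_
    by_cases h : 0 ≤ μ i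
    · positivity
    · rw [repr_eq_zero_of_mem_span' hM _ v hv i h]
      simp
  -- q is nonpositive on Em
  have hEneg : ∀ v ∈ Em, v ⬝ᵥ (M *ᵥ v) ≤ 0 := by
    intro v hv
    rw [quad_expand' hM v]
    refine Finset.sum_nonpos fun i _ => ?_
    by_cases h : μ i ≤ 0
    · have := sq_nonneg (hM.eigenvectorBasis.repr v i)
      nlinarith
    · rw [repr_eq_zero_of_mem_span' hM _ v hv i h]
      simp
  -- the two dimension inequalities
  have hdim1 := disjoint_dim_le' (fun v => v ⬝ᵥ (M *ᵥ v)) Wp Ep hWneg hEpos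
  have hdim2 := disjoint_dim_le' (fun v => -(v ⬝ᵥ (M *ᵥ v))) Wm Em
    (fun v hv hvne => neg_neg_iff_pos.mpr (hWpos v hv hvne))
    (fun v hv => neg_nonneg.mpr (hEneg v hv))
  rw [hWp, hEp, finrank_span_single', finrank_span_eigen'] at hdim1
  rw [hWm, hEm, finrank_span_single', finrank_span_eigen'] at hdim2
  -- counting
  have hc1 : (Finset.univ.filter (fun x : Fin n => S x x = 1)).card
      + (Finset.univ.filter (fun x : Fin n => ¬ S x x = 1)).card = n := by
    rw [Finset.card_filter_add_card_filter_not]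
    simp
  have hc2 : (Finset.univ.filter (fun x : Fin n => S x x = -1))
      = (Finset.univ.filter (fun x : Fin n => ¬ S x x = 1)) := by
    refine Finset.filter_congr fun x _ => ?_
    rcases hpm x with h | h <;> simp [h] <;> norm_num [h]
  have hc3 : (Finset.univ.filter (fun i : Fin n => μ i < 0)).card
      + (Finset.univ.filter (fun i : Fin n => ¬ μ i < 0)).card = n := by
    rw [Finset.card_filter_add_card_filter_not]
    simp
  have hc4 : (Finset.univ.filter (fun i : Fin n => 0 ≤ μ i))
      = (Finset.univ.filter (fun i : Fin n => ¬ μ i < 0)) := by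
    refine Finset.filter_congr fun i _ => ?_
    simp [not_lt]
  have hc5 : (Finset.univ.filter (fun i : Fin n => μ i < 0)).card
      ≤ (Finset.univ.filter (fun i : Fin n => μ i ≤ 0)).card := by
    refine Finset.card_le_card ?_
    intro i hi
    simp only [Finset.mem_filter] at *
    exact ⟨hi.1, le_of_lt hi.2⟩
  rw [hc2] at hdim2
  rw [hc4] at hdim1
  omega
end

section
/- If a configuration on ℤ² has no two ions at squared distance 1 or 2, and its density (in the sense of a periodic configuration with period L) is strictly greater than 1/5, then some ion has another ion at squared distance exactly 4 or 5. -/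
lemma per_shift (w : ℤ × ℤ → Bool) (L : ℕ)
    (hper : ∀ x : ℤ × ℤ, w (x + ((L : ℤ), 0)) = w x ∧ w (x + (0, (L : ℤ))) = w x)
    (m n : ℤ) (x : ℤ × ℤ) : w (x + (m * L, n * L)) = w x := by
  have h1 : ∀ m : ℤ, ∀ x : ℤ × ℤ, w (x + (m * L, 0)) = w x := by
    intro m
    induction m using Int.induction_on with
    | zero => intro x; simp [Prod.mk_zero_zero]
    | succ k ih =>
        intro x
        have e : x + (((k:ℤ)+1) * L, 0) = (x + ((k:ℤ) * L, 0)) + ((L:ℤ), 0) := by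
          simp [Prod.ext_iff]; ring
        rw [e, (hper _).1, ih]
    | pred k ih =>
        intro x
        have e : x + ((-(k:ℤ)-1) * L, 0) + ((L:ℤ),0) = x + (-(k:ℤ) * L, 0) := by
          simp [Prod.ext_iff]; ring
        have h := (hper (x + ((-(k:ℤ)-1) * L, 0))).1
        rw [e] at h
        rw [← h, ih]
  have h2 : ∀ n : ℤ, ∀ x : ℤ × ℤ, w (x + (0, n * L)) = w x := by
    intro n
    induction n using Int.induction_on with
    | zero => intro x; simp [Prod.mk_zero_zero]
    | succ k ih =>
        intro x
        have e : x + (0, ((k:ℤ)+1) * L) = (x + (0, (k:ℤ) * L)) + (0, (L:ℤ)) := by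
          simp [Prod.ext_iff]; ring
        rw [e, (hper _).2, ih]
    | pred k ih =>
        intro x
        have e : x + (0, (-(k:ℤ)-1) * L) + (0, (L:ℤ)) = x + (0, -(k:ℤ) * L) := by
          simp [Prod.ext_iff]; ring
        have h := (hper (x + (0, (-(k:ℤ)-1) * L))).2
        rw [e] at h
        rw [← h, ih]
  have e : x + (m * L, n * L) = (x + (m * L, 0)) + (0, n * L) := by
    simp [Prod.ext_iff]
  rw [e, h2, h1]

lemma mul_zero_of_bounds (L : ℕ) (hL : 0 < L) (m : ℤ)
    (h1 : -(L:ℤ) < L * m) (h2 : (L:ℤ) * m < L) : m = 0 := by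
  rcases lt_trichotomy m 0 with h | h | h
  · exfalso
    have : (L:ℤ) * m ≤ (L:ℤ) * (-1) :=
      mul_le_mul_of_nonneg_left (by omega) (by positivity)
    linarith
  · exact h
  · exfalso
    have : (L:ℤ) * 1 ≤ (L:ℤ) * m :=
      mul_le_mul_of_nonneg_left (by omega) (by positivity)
    linarith

lemma offsets_fact :
    ∀ a ∈ ({((0:ℤ),(0:ℤ)), (1,0), (-1,0), (0,1), (0,-1)} : Finset (ℤ × ℤ)),
    ∀ b ∈ ({((0:ℤ),(0:ℤ)), (1,0), (-1,0), (0,1), (0,-1)} : Finset (ℤ × ℤ)),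
      a = b ∨ (b.1 - a.1)^2 + (b.2 - a.2)^2 = 1 ∨ (b.1 - a.1)^2 + (b.2 - a.2)^2 = 2
        ∨ (b.1 - a.1)^2 + (b.2 - a.2)^2 = 4 := by decide

/-- If an `L`-periodic configuration on `ℤ²` has no two ions at squared distance `1` or `2`
(i.e. distinct ions are at squared distance `≥ 3`) and has density strictly greater than
`1/5`, then some two distinct ions are at squared distance exactly `4` or `5`. -/
theorem exists_dist_four_or_five_of_density_gt_one_fifth
    (w : ℤ × ℤ → Bool) (L : ℕ) (hL : 0 < L)
    (hper : ∀ x : ℤ × ℤ, w (x + ((L : ℤ), 0)) = w x ∧ w (x + (0, (L : ℤ))) = w x)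
    (hmin : ∀ x y : ℤ × ℤ, w x = true → w y = true → x ≠ y →
      3 ≤ (x.1 - y.1) ^ 2 + (x.2 - y.2) ^ 2)
    (hdens : (1 : ℝ) / 5 <
      (((Finset.range L ×ˢ Finset.range L).filter
        (fun p => w ((p.1 : ℤ), (p.2 : ℤ)) = true)).card : ℝ) / (L : ℝ) ^ 2) :
    ∃ x y : ℤ × ℤ, w x = true ∧ w y = true ∧ x ≠ y ∧
      ((x.1 - y.1) ^ 2 + (x.2 - y.2) ^ 2 = 4 ∨ (x.1 - y.1) ^ 2 + (x.2 - y.2) ^ 2 = 5) := by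
  by_contra hcon
  push_neg at hcon
  set F := ((Finset.range L ×ˢ Finset.range L).filter
      (fun p => w ((p.1 : ℤ), (p.2 : ℤ)) = true)) with hF
  -- F is nonempty
  have hNpos : 0 < F.card := by
    by_contra h
    have h0 : F.card = 0 := by omega
    rw [h0] at hdens
    norm_num at hdens
  -- density gives L^2 < 5 * F.card
  have hdens' : L * L < 5 * F.card := by
    have hL2 : (0:ℝ) < (L:ℝ) ^ 2 := by positivity
    rw [div_lt_div_iff₀ (by norm_num) hL2] at hdens
    have : (L:ℝ) * L < 5 * F.card := by nlinarith [hdens]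
    exact_mod_cast this
  rcases Nat.lt_or_ge L 3 with hL3 | hL3
  · -- small L : L = 1 or 2
    obtain ⟨u, hu⟩ := Finset.card_pos.mp hNpos
    rw [hF, Finset.mem_filter] at hu
    set x : ℤ × ℤ := ((u.1 : ℤ), (u.2 : ℤ)) with hx
    have hwx : w x = true := hu.2
    have hwy : w (x + ((L:ℤ), 0)) = true := by rw [(hper x).1]; exact hwx
    have hxy : x ≠ x + ((L:ℤ), 0) := by
      intro h
      apply_fun Prod.fst at h
      simp at h
      omega
    have h3 := hmin x (x + ((L:ℤ), 0)) hwx hwy hxy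
    have hc := (hcon x (x + ((L:ℤ), 0)) hwx hwy hxy).1
    have e : (x.1 - (x + ((L:ℤ),0)).1) ^ 2 + (x.2 - (x + ((L:ℤ),0)).2) ^ 2 = (L:ℤ)^2 := by
      simp
    rw [e] at h3 hc
    interval_cases L
    · norm_num at h3
    · norm_num at hc
  · -- main case : L ≥ 3
    set O : Finset (ℤ × ℤ) := {((0:ℤ),(0:ℤ)), (1,0), (-1,0), (0,1), (0,-1)} with hO
    have hOcard : O.card = 5 := by decide
    have castinj : Function.Injective (fun p : ℕ × ℕ => ((p.1 : ℤ), (p.2 : ℤ))) := by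
      intro u v h
      simp only [Prod.ext_iff] at h ⊢
      exact ⟨by exact_mod_cast h.1, by exact_mod_cast h.2⟩
    set S' := F.image (fun p : ℕ × ℕ => ((p.1 : ℤ), (p.2 : ℤ))) with hS'
    have hS'card : S'.card = F.card := Finset.card_image_of_injective _ castinj
    have hmemS' : ∀ p ∈ S', w p = true ∧ 0 ≤ p.1 ∧ p.1 < L ∧ 0 ≤ p.2 ∧ p.2 < L := by
      intro p hp
      rw [hS', Finset.mem_image] at hp
      obtain ⟨u, hu, rfl⟩ := hp
      rw [hF, Finset.mem_filter, Finset.mem_product, Finset.mem_range, Finset.mem_range] at hu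
      refine ⟨hu.2, by positivity, ?_, by positivity, ?_⟩
      · show ((u.1:ℤ)) < L
        exact_mod_cast hu.1.1
      · show ((u.2:ℤ)) < L
        exact_mod_cast hu.1.2
    set T := (Finset.range L ×ˢ Finset.range L).image (fun p : ℕ × ℕ => ((p.1 : ℤ), (p.2 : ℤ))) with hT
    have hTcard : T.card = L * L := by
      rw [hT, Finset.card_image_of_injective _ castinj, Finset.card_product, Finset.card_range]
    set g : (ℤ × ℤ) × (ℤ × ℤ) → ℤ × ℤ :=
      fun z => ((z.1.1 + z.2.1) % (L:ℤ), (z.1.2 + z.2.2) % (L:ℤ)) with hg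
    have hmaps : ∀ z ∈ S' ×ˢ O, g z ∈ T := by
      intro z _
      rw [hT, Finset.mem_image]
      have hL0 : (L:ℤ) ≠ 0 := by exact_mod_cast hL.ne'
      have hLpos : (0:ℤ) < L := by exact_mod_cast hL
      refine ⟨(((z.1.1 + z.2.1) % (L:ℤ)).toNat, ((z.1.2 + z.2.2) % (L:ℤ)).toNat), ?_, ?_⟩
      · rw [Finset.mem_product, Finset.mem_range, Finset.mem_range]
        constructor <;>
        · rw [← Nat.cast_lt (α := ℤ)]
          rw [Int.toNat_of_nonneg (Int.emod_nonneg _ hL0)]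
          exact Int.emod_lt_of_pos _ hLpos
      · simp only [hg, Prod.ext_iff]
        constructor <;> exact Int.toNat_of_nonneg (Int.emod_nonneg _ hL0)
    have hinj : Set.InjOn g (S' ×ˢ O) := by
      intro z1 hz1 z2 hz2 hgz
      simp only [Set.mem_prod, Finset.mem_coe] at hz1 hz2
      obtain ⟨p, a⟩ := z1
      obtain ⟨q, b⟩ := z2
      obtain ⟨hpS, haO⟩ := hz1
      obtain ⟨hqS, hbO⟩ := hz2
      simp only [hg, Prod.ext_iff] at hgz
      obtain ⟨hg1, hg2⟩ := hgz
      have hd1 : (L:ℤ) ∣ (q.1 + b.1) - (p.1 + a.1) := Int.ModEq.dvd hg1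
      have hd2 : (L:ℤ) ∣ (q.2 + b.2) - (p.2 + a.2) := Int.ModEq.dvd hg2
      obtain ⟨m, hm⟩ := hd1
      obtain ⟨n, hn⟩ := hd2
      set q' : ℤ × ℤ := (q.1 - L * m, q.2 - L * n) with hq'
      obtain ⟨hwp, hp1, hp2, hp3, hp4⟩ := hmemS' p hpS
      obtain ⟨hwq, hq1, hq2, hq3, hq4⟩ := hmemS' q hqS
      have hwq' : w q' = true := by
        have e : q' = (q.1, q.2) + ((-m) * L, (-n) * L) := by
          simp only [hq', Prod.ext_iff, Prod.fst_add, Prod.snd_add]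
          constructor <;> ring
        rw [e, per_shift w L hper]
        exact hwq
      have d1 : p.1 - q'.1 = b.1 - a.1 := by
        simp only [hq']
        linarith [hm]
      have d2 : p.2 - q'.2 = b.2 - a.2 := by
        simp only [hq']
        linarith [hn]
      rcases offsets_fact a haO b hbO with hab | h124
      · -- a = b, then p = q' and m = n = 0, so p = q
        subst hab
        have e1 : p.1 = q.1 - L * m := by
          have := d1; simp only [hq'] at this; linarith
        have e2 : p.2 = q.2 - L * n := by
          have := d2; simp only [hq'] at this; linarith
        have hm0 : m = 0 := mul_zero_of_bounds L hL m (by linarith) (by linarith)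
        have hn0 : n = 0 := mul_zero_of_bounds L hL n (by linarith) (by linarith)
        have : p = q := by
          rw [Prod.ext_iff]
          constructor
          · rw [e1, hm0]; ring
          · rw [e2, hn0]; ring
        rw [this]
      · -- p ≠ q' : use hmin and hcon
        exfalso
        have hpq' : p ≠ q' := by
          intro h
          rw [h] at d1 d2
          have z1 : b.1 - a.1 = 0 := by omega
          have z2 : b.2 - a.2 = 0 := by omega
          rcases h124 with h4 | h4 | h4 <;> rw [z1, z2] at h4 <;> norm_num at h4
        have h3 := hmin p q' hwp hwq' hpq'
        rw [d1, d2] at h3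
        have hc := hcon p q' hwp hwq' hpq'
        rw [d1, d2] at hc
        rcases h124 with h | h | h <;> omega
    have hinj' : Set.InjOn g ↑(S' ×ˢ O) := by
      rw [Finset.coe_product]; exact hinj
    have hcard := Finset.card_le_card_of_injOn g hmaps hinj'
    rw [Finset.card_product, hS'card, hOcard, hTcard] at hcard
    omega
end
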